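/- Let 1 ≤ p < n, let r be an integer with p ≤ r < n such that |λ_p|/2 ≤ λ_p − λ_{r+1}, and assume 0 < 4‖E‖ ≤ δ_p := λ_p − λ_{p+1} ≤ |λ_p|/4. With x₀ = λ_p − δ_p/2 and T = 2σ₁, one has ∫_{−T}^{T} ‖ ( Σ_{r<i≤n} u_i u_iᵀ/(x₀+it−λ_i) ) E ( Σ_{r<j≤n} u_j u_jᵀ/(x₀+it−λ_j) ) ‖ dt ≤ 16‖E‖/|λ_p|. -/

import Mathlib

open Matrix

/-- The spectral norm (ℓ²→ℓ² operator norm) of a matrix. -/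
noncomputable def specNorm {𝕜 : Type*} [RCLike 𝕜] {m n : ℕ}
    (M : Matrix (Fin m) (Fin n) 𝕜) : ℝ :=
  ‖LinearMap.toContinuousLinearMap (Matrix.toEuclideanLin M)‖

section Aux

open scoped Matrix.Norms.L2Operator InnerProductSpace

lemma specNorm_eq_norm {𝕜 : Type*} [RCLike 𝕜] {m n : ℕ} (M : Matrix (Fin m) (Fin n) 𝕜) :
    specNorm M = ‖M‖ := rfl

lemma specNorm_nonneg' {𝕜 : Type*} [RCLike 𝕜] {m n : ℕ} (M : Matrix (Fin m) (Fin n) 𝕜) :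
    0 ≤ specNorm M := norm_nonneg _

lemma specNorm_mul_le {𝕜 : Type*} [RCLike 𝕜] {n : ℕ} (M N : Matrix (Fin n) (Fin n) 𝕜) :
    specNorm (M * N) ≤ specNorm M * specNorm N := by
  simp only [specNorm_eq_norm]; exact Matrix.l2_opNorm_mul M N

lemma vecMulVec_mulVec' {n : ℕ} (v w x : Fin n → ℂ) :
    vecMulVec v w *ᵥ x = (w ⬝ᵥ x) • v := by
  funext k
  simp [vecMulVec_apply, mulVec, dotProduct, Finset.sum_mul, Finset.mul_sum]
  congr 1; funext j; ring

lemma specNorm_sum_rankOne_le {n : ℕ} (S : Finset ℕ) (v : ℕ → (Fin n → ℝ))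
    (hv : ∀ i ∈ S, ∀ j ∈ S, v i ⬝ᵥ v j = if i = j then 1 else 0)
    (c : ℕ → ℂ) (C : ℝ) (hC : 0 ≤ C) (hc : ∀ i ∈ S, ‖c i‖ ≤ C) :
    specNorm (∑ i ∈ S, c i • (vecMulVec (v i) (v i)).map Complex.ofReal) ≤ C := by
  classical
  set vc : ℕ → (Fin n → ℂ) := fun i k => (v i k : ℂ) with hvc
  set w : S → EuclideanSpace ℂ (Fin n) := fun i => (WithLp.equiv 2 _).symm (vc i) with hw
  have hstar : ∀ i, star (vc i) = vc i := by
    intro i; funext k; simp [hvc, Pi.star_apply, Complex.conj_ofReal]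
  have horth : Orthonormal ℂ w := by
    rw [orthonormal_iff_ite]
    intro i j
    have : ⟪w i, w j⟫_ℂ = star (vc i) ⬝ᵥ (vc j) := by
      rw [dotProduct_comm]; rfl
    rw [this, hstar]
    have : (vc i : Fin n → ℂ) ⬝ᵥ vc j = ((v i ⬝ᵥ v j : ℝ) : ℂ) := by
      simp [hvc, dotProduct]
    rw [this, hv i i.2 j j.2]
    by_cases h : (i : ℕ) = (j : ℕ)
    · simp [h, Subtype.ext h]
    · have hne : i ≠ j := fun hij => h (congrArg Subtype.val hij)
      simp [h, hne]
  have hmat : ∀ i : ℕ, (vecMulVec (v i) (v i)).map Complex.ofReal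
      = vecMulVec (vc i) (vc i) := by
    intro i; ext k l; simp [vecMulVec_apply, hvc]
  rw [specNorm_eq_norm, Matrix.l2_opNorm_def]
  apply ContinuousLinearMap.opNorm_le_bound _ hC
  intro x
  have hy : (Matrix.toEuclideanLin (𝕜 := ℂ)
        (∑ i ∈ S, c i • (vecMulVec (v i) (v i)).map Complex.ofReal)) x
      = ∑ i : S, (c i * ⟪w i, x⟫_ℂ) • w i := by
    rw [map_sum]
    rw [LinearMap.sum_apply]
    rw [← Finset.sum_attach S
      (fun i => (Matrix.toEuclideanLin (c i • (vecMulVec (v i) (v i)).map Complex.ofReal)) x)]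
    rw [Finset.univ_eq_attach]
    refine Finset.sum_congr rfl fun i _ => ?_
    rw [hmat, _root_.map_smul, LinearMap.smul_apply]
    have : (Matrix.toEuclideanLin (vecMulVec (vc i) (vc i))) x
        = (⟪w i, x⟫_ℂ) • w i := by
      have h1 : ⟪w i, x⟫_ℂ = star (vc i) ⬝ᵥ (WithLp.equiv 2 _ x) := by
          rw [dotProduct_comm]; rfl
      rw [Matrix.toEuclideanLin_apply, vecMulVec_mulVec', h1, hstar]
      rfl
    rw [this, smul_smul]
  show ‖(Matrix.toEuclideanLin
      (∑ i ∈ S, c i • (vecMulVec (v i) (v i)).map Complex.ofReal)) x‖ ≤ C * ‖x‖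
  rw [hy]
  set a : S → ℂ := fun i => c i * ⟪w i, x⟫_ℂ with ha
  have hnorm2 : ‖∑ i : S, a i • w i‖ ^ 2 = ∑ i : S, ‖a i‖ ^ 2 := by
    have h1 := @inner_self_eq_norm_sq ℂ _ _ _ _ (∑ i : S, a i • w i)
    rw [horth.inner_sum a a Finset.univ] at h1
    rw [← h1]
    have h2 : RCLike.re (∑ i : S, (starRingEnd ℂ) (a i) * a i)
        = ∑ i : S, ((starRingEnd ℂ) (a i) * a i).re := by
      rw [RCLike.re_to_complex, Complex.re_sum]
    rw [h2]
    refine Finset.sum_congr rfl fun i _ => ?_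
    have : ((starRingEnd ℂ) (a i) * a i).re = ‖a i‖ ^ 2 := by
      rw [Complex.sq_norm, Complex.normSq_apply,
        Complex.mul_re, Complex.conj_re, Complex.conj_im]
      ring
    exact this
  have hb : ∑ i : S, ‖a i‖ ^ 2 ≤ C ^ 2 * ‖x‖ ^ 2 := by
    have h2 : ∀ i : S, ‖a i‖ ^ 2 ≤ C ^ 2 * ‖⟪w i, x⟫_ℂ‖ ^ 2 := by
      intro i
      rw [ha]
      simp only [norm_mul, mul_pow]
      have h3 := hc i i.2
      have h4 : (0:ℝ) ≤ ‖⟪w i, x⟫_ℂ‖ ^ 2 := by positivity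
      have h5 : ‖c (i:ℕ)‖ ^ 2 ≤ C ^ 2 := by nlinarith [norm_nonneg (c (i:ℕ))]
      exact mul_le_mul_of_nonneg_right h5 h4
    calc ∑ i : S, ‖a i‖ ^ 2 ≤ ∑ i : S, C ^ 2 * ‖⟪w i, x⟫_ℂ‖ ^ 2 :=
          Finset.sum_le_sum fun i _ => h2 i
      _ = C ^ 2 * ∑ i : S, ‖⟪w i, x⟫_ℂ‖ ^ 2 := by rw [Finset.mul_sum]
      _ ≤ C ^ 2 * ‖x‖ ^ 2 :=
          mul_le_mul_of_nonneg_left (horth.sum_inner_products_le x) (by positivity)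
  have hsq : ‖∑ i : S, a i • w i‖ ^ 2 ≤ (C * ‖x‖) ^ 2 := by
    rw [hnorm2]
    calc _ ≤ C ^ 2 * ‖x‖ ^ 2 := hb
      _ = (C * ‖x‖) ^ 2 := by ring
  calc ‖∑ i : S, a i • w i‖ = Real.sqrt (‖∑ i : S, a i • w i‖ ^ 2) :=
        (Real.sqrt_sq (norm_nonneg _)).symm
    _ ≤ Real.sqrt ((C * ‖x‖) ^ 2) := Real.sqrt_le_sqrt hsq
    _ = C * ‖x‖ := Real.sqrt_sq (by positivity)

lemma euclidean_norm_sq {𝕜 : Type*} [RCLike 𝕜] {n : ℕ} (x : EuclideanSpace 𝕜 (Fin n)) :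
    ‖x‖ ^ 2 = ∑ k, ‖x k‖ ^ 2 := by
  rw [EuclideanSpace.norm_eq, Real.sq_sqrt (by positivity)]

lemma specNorm_map_ofReal_le {n : ℕ} (E : Matrix (Fin n) (Fin n) ℝ) :
    specNorm (E.map Complex.ofReal) ≤ specNorm E := by
  rw [specNorm_eq_norm, Matrix.l2_opNorm_def]
  apply ContinuousLinearMap.opNorm_le_bound _ (by rw [specNorm_eq_norm]; exact norm_nonneg _)
  intro x
  show ‖(Matrix.toEuclideanLin (E.map Complex.ofReal)) x‖ ≤ specNorm E * ‖x‖
  have hs : 0 ≤ specNorm E := by rw [specNorm_eq_norm]; exact norm_nonneg _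
  set a : EuclideanSpace ℝ (Fin n) := (WithLp.equiv 2 _).symm (fun k => (x k).re) with haa
  set b : EuclideanSpace ℝ (Fin n) := (WithLp.equiv 2 _).symm (fun k => (x k).im) with hbb
  have hre : ∀ k, ((Matrix.toEuclideanLin (E.map Complex.ofReal)) x k).re
      = (Matrix.toEuclideanLin E) a k := by
    intro k
    show ((E.map Complex.ofReal *ᵥ fun j => x j) k).re = (E *ᵥ fun j => a j) k
    simp [mulVec, dotProduct, Complex.re_sum, Complex.mul_re, haa]
  have him : ∀ k, ((Matrix.toEuclideanLin (E.map Complex.ofReal)) x k).im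
      = (Matrix.toEuclideanLin E) b k := by
    intro k
    show ((E.map Complex.ofReal *ᵥ fun j => x j) k).im = (E *ᵥ fun j => b j) k
    simp [mulVec, dotProduct, Complex.im_sum, Complex.mul_im, hbb]
  have hxsq : ‖a‖ ^ 2 + ‖b‖ ^ 2 = ‖x‖ ^ 2 := by
    rw [euclidean_norm_sq, euclidean_norm_sq, euclidean_norm_sq, ← Finset.sum_add_distrib]
    refine Finset.sum_congr rfl fun k _ => ?_
    simp only [Real.norm_eq_abs, sq_abs, Complex.sq_norm,
      Complex.normSq_apply]
    show (x k).re ^ 2 + (x k).im ^ 2 = _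
    ring
  have hEa : ‖(Matrix.toEuclideanLin E) a‖ ≤ specNorm E * ‖a‖ :=
    (LinearMap.toContinuousLinearMap (Matrix.toEuclideanLin E)).le_opNorm a
  have hEb : ‖(Matrix.toEuclideanLin E) b‖ ≤ specNorm E * ‖b‖ :=
    (LinearMap.toContinuousLinearMap (Matrix.toEuclideanLin E)).le_opNorm b
  have hsq : ‖(Matrix.toEuclideanLin (E.map Complex.ofReal)) x‖ ^ 2
      = ‖(Matrix.toEuclideanLin E) a‖ ^ 2 + ‖(Matrix.toEuclideanLin E) b‖ ^ 2 := by
    rw [euclidean_norm_sq, euclidean_norm_sq, euclidean_norm_sq, ← Finset.sum_add_distrib]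
    refine Finset.sum_congr rfl fun k _ => ?_
    rw [Complex.sq_norm, Complex.normSq_apply, hre, him]
    simp only [Real.norm_eq_abs, sq_abs]
    ring
  have h1 : ‖(Matrix.toEuclideanLin (E.map Complex.ofReal)) x‖ ^ 2
      ≤ (specNorm E * ‖x‖) ^ 2 := by
    rw [hsq]
    have h2 := pow_le_pow_left₀ (norm_nonneg ((Matrix.toEuclideanLin E) a)) hEa 2
    have h3 := pow_le_pow_left₀ (norm_nonneg ((Matrix.toEuclideanLin E) b)) hEb 2
    have h4 : (specNorm E * ‖x‖) ^ 2 = (specNorm E * ‖a‖) ^ 2 + (specNorm E * ‖b‖) ^ 2 := by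
      rw [mul_pow, mul_pow, mul_pow, ← hxsq]; ring
    linarith [h2, h3, h4]
  calc ‖(Matrix.toEuclideanLin (E.map Complex.ofReal)) x‖
      = Real.sqrt (‖(Matrix.toEuclideanLin (E.map Complex.ofReal)) x‖ ^ 2) :=
        (Real.sqrt_sq (norm_nonneg _)).symm
    _ ≤ Real.sqrt ((specNorm E * ‖x‖) ^ 2) := Real.sqrt_le_sqrt h1
    _ = specNorm E * ‖x‖ := Real.sqrt_sq (mul_nonneg hs (norm_nonneg _))

lemma integral_inv_sq_add_sq' {d : ℝ} (hd : 0 < d) (a b : ℝ) :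
    ∫ t in a..b, (d ^ 2 + t ^ 2)⁻¹
      = (1 / d) * Real.arctan (b / d) - (1 / d) * Real.arctan (a / d) := by
  have hder : ∀ t : ℝ, HasDerivAt (fun t => (1 / d) * Real.arctan (t / d))
      ((d ^ 2 + t ^ 2)⁻¹) t := by
    intro t
    have h1 : HasDerivAt (fun t : ℝ => t / d) (1 / d) t := by
      simpa using (hasDerivAt_id t).div_const d
    have h2 := (Real.hasDerivAt_arctan (t / d)).comp t h1
    have h3 := h2.const_mul (1 / d)
    refine h3.congr_deriv ?_
    field_simp
  refine (intervalIntegral.integral_eq_sub_of_hasDerivAt (fun t _ => hder t) ?_)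
  apply Continuous.intervalIntegrable
  exact ((continuous_const.add (continuous_pow 2)).inv₀
      (fun t => (add_pos_of_pos_of_nonneg (pow_pos hd 2) (sq_nonneg t)).ne'))

lemma continuous_specNorm {n : ℕ} {f : ℝ → Matrix (Fin n) (Fin n) ℂ} (hf : Continuous f) :
    Continuous fun t => specNorm (f t) := by
  have hL : Continuous fun M : Matrix (Fin n) (Fin n) ℂ =>
      (LinearMap.toContinuousLinearMap (Matrix.toEuclideanLin M)) := by
    have := LinearMap.continuous_of_finiteDimensional
      (𝕜 := ℂ) (E := Matrix (Fin n) (Fin n) ℂ)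
      (F' := EuclideanSpace ℂ (Fin n) →L[ℂ] EuclideanSpace ℂ (Fin n))
      ((Matrix.toEuclideanLin.trans LinearMap.toContinuousLinearMap).toLinearMap)
    exact this
  exact (continuous_norm.comp hL).comp hf

/-- The resolvent-type sum appearing in the theorem. -/
noncomputable def Pm {n : ℕ} (S : Finset ℕ) (v : ℕ → Fin n → ℝ) (lam : ℕ → ℝ)
    (x₀ t : ℝ) : Matrix (Fin n) (Fin n) ℂ :=
  ∑ i ∈ S, (1 / ((x₀ : ℂ) + t * Complex.I - (lam i : ℂ))) •
    (vecMulVec (v i) (v i)).map Complex.ofReal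

lemma Pm_abs_denom (S : Finset ℕ) (lam : ℕ → ℝ) {x₀ d : ℝ} (hd : 0 < d)
    (hgap : ∀ i ∈ S, d ≤ x₀ - lam i) (t : ℝ) (i : ℕ) (hi : i ∈ S) :
    Real.sqrt (d ^ 2 + t ^ 2) ≤ ‖(x₀ : ℂ) + t * Complex.I - (lam i : ℂ)‖ := by
  have hre : ((x₀ : ℂ) + t * Complex.I - (lam i : ℂ)).re = x₀ - lam i := by simp
  have him : ((x₀ : ℂ) + t * Complex.I - (lam i : ℂ)).im = t := by simp
  rw [Complex.norm_def, Complex.normSq_apply, hre, him]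
  apply Real.sqrt_le_sqrt
  have := hgap i hi
  nlinarith

lemma Pm_norm_le {n : ℕ} (S : Finset ℕ) (v : ℕ → Fin n → ℝ)
    (hv : ∀ i ∈ S, ∀ j ∈ S, v i ⬝ᵥ v j = if i = j then 1 else 0)
    (lam : ℕ → ℝ) {x₀ d : ℝ} (hd : 0 < d)
    (hgap : ∀ i ∈ S, d ≤ x₀ - lam i) (t : ℝ) :
    specNorm (Pm S v lam x₀ t) ≤ (Real.sqrt (d ^ 2 + t ^ 2))⁻¹ := by
  have hsp : 0 < Real.sqrt (d ^ 2 + t ^ 2) := Real.sqrt_pos.mpr (by positivity)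
  apply specNorm_sum_rankOne_le S v hv _ _ (le_of_lt (inv_pos.mpr hsp))
  intro i hi
  have h1 := Pm_abs_denom S lam hd hgap t i hi
  rw [norm_div, norm_one]
  rw [one_div]
  exact inv_anti₀ hsp h1

lemma Pm_continuous {n : ℕ} (S : Finset ℕ) (v : ℕ → Fin n → ℝ) (lam : ℕ → ℝ)
    {x₀ d : ℝ} (hd : 0 < d) (hgap : ∀ i ∈ S, d ≤ x₀ - lam i) :
    Continuous fun t => Pm S v lam x₀ t := by
  apply continuous_finset_sum
  intro i hi
  have hzc : Continuous fun t : ℝ => ((x₀ : ℂ) + t * Complex.I - (lam i : ℂ)) := by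
    continuity
  have hzne : ∀ t : ℝ, ((x₀ : ℂ) + t * Complex.I - (lam i : ℂ)) ≠ 0 := by
    intro t h0
    have h1 := Pm_abs_denom S lam hd hgap t i hi
    have hsp : 0 < Real.sqrt (d ^ 2 + t ^ 2) := Real.sqrt_pos.mpr (by positivity)
    rw [h0] at h1
    simp at h1
    linarith
  exact ((continuous_const.div hzc hzne).smul continuous_const)

lemma integral_bound_aux {n : ℕ} (S : Finset ℕ) (v : ℕ → Fin n → ℝ)
    (hv : ∀ i ∈ S, ∀ j ∈ S, v i ⬝ᵥ v j = if i = j then 1 else 0)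
    (E : Matrix (Fin n) (Fin n) ℝ) (lam : ℕ → ℝ) (x₀ d T : ℝ)
    (hd : 0 < d) (hT : 0 ≤ T) (hgap : ∀ i ∈ S, d ≤ x₀ - lam i) :
    (∫ t in (-T)..T,
        specNorm (Pm S v lam x₀ t * E.map Complex.ofReal * Pm S v lam x₀ t))
      ≤ specNorm E * (Real.pi / d) := by
  have hEnn : 0 ≤ specNorm E := specNorm_nonneg' E
  have hpoint : ∀ t : ℝ,
      specNorm (Pm S v lam x₀ t * E.map Complex.ofReal * Pm S v lam x₀ t)
        ≤ specNorm E * (d ^ 2 + t ^ 2)⁻¹ := by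
    intro t
    have hsp : 0 < Real.sqrt (d ^ 2 + t ^ 2) := Real.sqrt_pos.mpr (by positivity)
    have hC : (0:ℝ) ≤ (Real.sqrt (d ^ 2 + t ^ 2))⁻¹ := by positivity
    have hP := Pm_norm_le S v hv lam hd hgap t
    have hE' : specNorm (E.map Complex.ofReal) ≤ specNorm E := specNorm_map_ofReal_le E
    have h1 := specNorm_mul_le (Pm S v lam x₀ t * E.map Complex.ofReal) (Pm S v lam x₀ t)
    have h2 := specNorm_mul_le (Pm S v lam x₀ t) (E.map Complex.ofReal)
    have hsq : (Real.sqrt (d ^ 2 + t ^ 2))⁻¹ * (Real.sqrt (d ^ 2 + t ^ 2))⁻¹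
        = (d ^ 2 + t ^ 2)⁻¹ := by
      rw [← mul_inv, Real.mul_self_sqrt (by positivity)]
    calc specNorm (Pm S v lam x₀ t * E.map Complex.ofReal * Pm S v lam x₀ t)
        ≤ specNorm (Pm S v lam x₀ t * E.map Complex.ofReal) * specNorm (Pm S v lam x₀ t) := h1
      _ ≤ (specNorm (Pm S v lam x₀ t) * specNorm (E.map Complex.ofReal))
            * specNorm (Pm S v lam x₀ t) :=
          mul_le_mul_of_nonneg_right h2 (specNorm_nonneg' _)
      _ ≤ ((Real.sqrt (d ^ 2 + t ^ 2))⁻¹ * specNorm E) * (Real.sqrt (d ^ 2 + t ^ 2))⁻¹ := by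
          apply mul_le_mul _ hP (specNorm_nonneg' _) (mul_nonneg hC hEnn)
          exact mul_le_mul hP hE' (specNorm_nonneg' _) hC
      _ = specNorm E * ((Real.sqrt (d ^ 2 + t ^ 2))⁻¹ * (Real.sqrt (d ^ 2 + t ^ 2))⁻¹) := by
          ring
      _ = specNorm E * (d ^ 2 + t ^ 2)⁻¹ := by rw [hsq]
  have hFc : Continuous fun t =>
      specNorm (Pm S v lam x₀ t * E.map Complex.ofReal * Pm S v lam x₀ t) := by
    apply continuous_specNorm
    exact ((Pm_continuous S v lam hd hgap).matrix_mul continuous_const).matrix_mul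
      (Pm_continuous S v lam hd hgap)
  have hgc : Continuous fun t : ℝ => specNorm E * (d ^ 2 + t ^ 2)⁻¹ :=
    continuous_const.mul ((continuous_const.add (continuous_pow 2)).inv₀
      fun t => (add_pos_of_pos_of_nonneg (pow_pos hd 2) (sq_nonneg t)).ne')
  calc (∫ t in (-T)..T,
        specNorm (Pm S v lam x₀ t * E.map Complex.ofReal * Pm S v lam x₀ t))
      ≤ ∫ t in (-T)..T, specNorm E * (d ^ 2 + t ^ 2)⁻¹ := by
        apply intervalIntegral.integral_mono_on (by linarith)
          (hFc.intervalIntegrable _ _) (hgc.intervalIntegrable _ _)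
        exact fun t _ => hpoint t
    _ = specNorm E * ((1 / d) * Real.arctan (T / d) - (1 / d) * Real.arctan (-T / d)) := by
        rw [intervalIntegral.integral_const_mul, integral_inv_sq_add_sq' hd]
    _ ≤ specNorm E * (Real.pi / d) := by
        apply mul_le_mul_of_nonneg_left _ hEnn
        have h1 : Real.arctan (T / d) ≤ Real.pi / 2 := (Real.arctan_lt_pi_div_two _).le
        have h2 : Real.arctan (-T / d) = -Real.arctan (T / d) := by
          rw [neg_div, Real.arctan_neg]
        rw [h2]
        have h3 : (1 / d) * Real.arctan (T / d) - (1 / d) * (-Real.arctan (T / d))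
            = 2 * Real.arctan (T / d) / d := by ring
        rw [h3]
        exact (div_le_div_iff_of_pos_right hd).mpr (by linarith)

end Aux

/-- **Bound on the `(i,j > r)` block of `M₁`.**  Indices are 1-based;
`σ₁ = ‖A‖`, `x₀ = λ_p − δ_p/2`, `T = 2σ₁`. -/
theorem M1_tail_block_bound
    {n : ℕ} (A E : Matrix (Fin n) (Fin n) ℝ) (hA : A.IsSymm) (hE : E.IsSymm)
    (lam : ℕ → ℝ)
    (hlam_mono : ∀ i ∈ Finset.Icc 1 n, ∀ j ∈ Finset.Icc 1 n, i ≤ j → lam j ≤ lam i)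
    (u : ℕ → (Fin n → ℝ))
    (hu_on : ∀ i ∈ Finset.Icc 1 n, ∀ j ∈ Finset.Icc 1 n,
      u i ⬝ᵥ u j = if i = j then 1 else 0)
    (hu_eig : ∀ i ∈ Finset.Icc 1 n, A *ᵥ u i = lam i • u i)
    (p : ℕ) (hp1 : 1 ≤ p) (hpn : p < n)
    (r : ℕ) (hpr : p ≤ r) (hrn : r < n)
    (hr_half : |lam p| / 2 ≤ lam p - lam (r + 1))
    (δp : ℝ) (hδp : δp = lam p - lam (p + 1))
    (hE_pos : 0 < specNorm E)
    (hgap_lo : 4 * specNorm E ≤ δp) (hgap_hi : δp ≤ |lam p| / 4)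
    (x₀ T : ℝ) (hx₀ : x₀ = lam p - δp / 2) (hT : T = 2 * specNorm A) :
    (∫ t in (-T)..T, specNorm
      ((∑ i ∈ Finset.Icc (r + 1) n,
          (1 / ((x₀ : ℂ) + t * Complex.I - (lam i : ℂ))) •
            (vecMulVec (u i) (u i)).map Complex.ofReal)
        * E.map Complex.ofReal
        * (∑ j ∈ Finset.Icc (r + 1) n,
          (1 / ((x₀ : ℂ) + t * Complex.I - (lam j : ℂ))) •
            (vecMulVec (u j) (u j)).map Complex.ofReal)))
      ≤ 16 * specNorm E / |lam p| := by
  have hlp : 0 < |lam p| := by linarith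
  have hd : 0 < 3 * |lam p| / 8 := by linarith
  have hsub : ∀ i ∈ Finset.Icc (r + 1) n, i ∈ Finset.Icc 1 n := by
    intro i hi
    rw [Finset.mem_Icc] at hi ⊢
    omega
  have hv' : ∀ i ∈ Finset.Icc (r + 1) n, ∀ j ∈ Finset.Icc (r + 1) n,
      u i ⬝ᵥ u j = if i = j then 1 else 0 :=
    fun i hi j hj => hu_on i (hsub i hi) j (hsub j hj)
  have hgap : ∀ i ∈ Finset.Icc (r + 1) n, 3 * |lam p| / 8 ≤ x₀ - lam i := by
    intro i hi
    rw [Finset.mem_Icc] at hi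
    have h1 : r + 1 ∈ Finset.Icc 1 n := Finset.mem_Icc.mpr ⟨by omega, by omega⟩
    have h2 : i ∈ Finset.Icc 1 n := Finset.mem_Icc.mpr ⟨by omega, hi.2⟩
    have h3 : lam i ≤ lam (r + 1) := hlam_mono (r + 1) h1 i h2 hi.1
    rw [hx₀]
    linarith
  have hT0 : 0 ≤ T := by
    rw [hT]; linarith [specNorm_nonneg' A]
  have key := integral_bound_aux (Finset.Icc (r + 1) n) u hv' E lam x₀
    (3 * |lam p| / 8) T hd hT0 hgap
  have heq : (∫ t in (-T)..T, specNorm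
      ((∑ i ∈ Finset.Icc (r + 1) n,
          (1 / ((x₀ : ℂ) + t * Complex.I - (lam i : ℂ))) •
            (vecMulVec (u i) (u i)).map Complex.ofReal)
        * E.map Complex.ofReal
        * (∑ j ∈ Finset.Icc (r + 1) n,
          (1 / ((x₀ : ℂ) + t * Complex.I - (lam j : ℂ))) •
            (vecMulVec (u j) (u j)).map Complex.ofReal)))
      = ∫ t in (-T)..T, specNorm
          (Pm (Finset.Icc (r + 1) n) u lam x₀ t * E.map Complex.ofReal
            * Pm (Finset.Icc (r + 1) n) u lam x₀ t) := rfl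
  rw [heq]
  refine le_trans key ?_
  have hπ : Real.pi ≤ 4 := Real.pi_le_four
  have h1 : Real.pi / (3 * |lam p| / 8) ≤ 16 / |lam p| := by
    rw [div_le_div_iff₀ hd hlp]
    nlinarith
  calc specNorm E * (Real.pi / (3 * |lam p| / 8))
      ≤ specNorm E * (16 / |lam p|) := mul_le_mul_of_nonneg_left h1 hE_pos.le
    _ = 16 * specNorm E / |lam p| := by ring
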